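/- Let (X,μ) be a measure space and let G be a family of measurable complex-valued functions on X. If G is uniformly integrable, then there exists a convex, increasing function ω: ℝ → [0,∞) with ω(t)/t → ∞ as t → ∞ such that sup_{g∈G} ∫_X ω(|g|) dμ < ∞ (indeed, one can arrange sup_{g∈G} ∫_X ω(|g|) dμ ≤ 1). -/

import Mathlib

open MeasureTheory Filter Set
open scoped ENNReal

noncomputable section

lemma omega_summable (c : ℕ → ℝ) (hc : ∀ n : ℕ, (n : ℝ) ≤ c n) (t : ℝ) :
    Summable (fun n => max (t - c n) 0) := by
  apply summable_of_ne_finset_zero (s := Finset.range ⌈t⌉₊)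
  intro n hn
  simp only [Finset.mem_range, not_lt] at hn
  have h1 : t ≤ c n := le_trans (Nat.le_ceil t) (le_trans (by exact_mod_cast hn) (hc n))
  simp [max_eq_right, sub_nonpos.mpr h1]

lemma omega_props (c : ℕ → ℝ) (hc : ∀ n : ℕ, (n : ℝ) ≤ c n) :
    ConvexOn ℝ Set.univ (fun t => ∑' n, max (t - c n) 0) ∧
    Monotone (fun t => ∑' n, max (t - c n) 0) ∧
    (∀ t, 0 ≤ ∑' n, max (t - c n) 0) ∧
    Tendsto (fun t => (∑' n, max (t - c n) 0) / t) atTop atTop := by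
  have hsum := omega_summable c hc
  refine ⟨?_, ?_, ?_, ?_⟩
  · refine ⟨convex_univ, ?_⟩
    intro x _ y _ a b ha hb hab
    simp only [smul_eq_mul]
    have hterm : ∀ n, max (a*x + b*y - c n) 0 ≤ a * max (x - c n) 0 + b * max (y - c n) 0 := by
      intro n
      rw [max_le_iff]
      constructor
      · have e : a * x + b * y - c n = a * (x - c n) + b * (y - c n) := by
          linear_combination c n * hab
        have h1 := mul_le_mul_of_nonneg_left (le_max_left (x - c n) 0) ha
        have h2 := mul_le_mul_of_nonneg_left (le_max_left (y - c n) 0) hb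
        linarith
      · positivity
    calc ∑' n, max (a*x + b*y - c n) 0
        ≤ ∑' n, (a * max (x - c n) 0 + b * max (y - c n) 0) :=
          Summable.tsum_le_tsum hterm (hsum _) (((hsum x).mul_left a).add ((hsum y).mul_left b))
      _ = a * ∑' n, max (x - c n) 0 + b * ∑' n, max (y - c n) 0 := by
          rw [Summable.tsum_add ((hsum x).mul_left a) ((hsum y).mul_left b), tsum_mul_left, tsum_mul_left]
  · intro x y hxy
    exact Summable.tsum_le_tsum (fun n => max_le_max (by linarith) le_rfl) (hsum x) (hsum y)
  · intro t
    exact tsum_nonneg (fun n => le_max_right _ _)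
  · rw [tendsto_atTop]
    intro C
    obtain ⟨N, hN⟩ := exists_nat_ge (C + 1)
    set S := ∑ n ∈ Finset.range N, c n with hS
    have hS0 : 0 ≤ S := Finset.sum_nonneg (fun n _ => le_trans (Nat.cast_nonneg n) (hc n))
    filter_upwards [eventually_ge_atTop (max (2*S) 1)] with t ht
    have ht1 : 1 ≤ t := le_trans (le_max_right _ _) ht
    have ht2 : 2*S ≤ t := le_trans (le_max_left _ _) ht
    have hpart : (N:ℝ) * t - S ≤ ∑' n, max (t - c n) 0 := by
      calc (N:ℝ) * t - S = ∑ n ∈ Finset.range N, (t - c n) := by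
            rw [Finset.sum_sub_distrib, Finset.sum_const, Finset.card_range]
            ring
        _ ≤ ∑ n ∈ Finset.range N, max (t - c n) 0 :=
            Finset.sum_le_sum (fun n _ => le_max_left _ _)
        _ ≤ ∑' n, max (t - c n) 0 :=
            Summable.sum_le_tsum _ (fun n _ => le_max_right _ _) (hsum t)
    rw [le_div_iff₀ (by linarith)]
    nlinarith


/-- de la Vallée Poussin criterion, necessity: if the family `G` of measurable
complex-valued functions is uniformly integrable
(`sup_{g ∈ G} ∫_{{|g| ≥ t}} |g| dμ → 0` as `t → ∞`), then there is a convex,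
increasing `ω : ℝ → [0,∞)` with `ω(t)/t → ∞` and `sup_{g ∈ G} ∫ ω(|g|) dμ ≤ 1`. -/
theorem exists_convex_omega_of_unifIntegrable
    {X : Type*} [MeasurableSpace X] (μ : Measure X) {ι : Type*} (G : ι → X → ℂ)
    (hGmeas : ∀ i, Measurable (G i))
    (hui : Tendsto
      (fun t : ℝ => ⨆ i, ∫⁻ x in {x | t ≤ ‖G i x‖}, ENNReal.ofReal ‖G i x‖ ∂μ)
      atTop (nhds 0)) :
    ∃ ω : ℝ → ℝ, ConvexOn ℝ Set.univ ω ∧ Monotone ω ∧ (∀ t, 0 ≤ ω t) ∧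
      Tendsto (fun t => ω t / t) atTop atTop ∧
      (⨆ i, ∫⁻ x, ENNReal.ofReal (ω ‖G i x‖) ∂μ) ≤ 1 := by
  have key : ∀ n : ℕ, ∃ T : ℝ, (n : ℝ) ≤ T ∧
      (⨆ i, ∫⁻ x in {x | T ≤ ‖G i x‖}, ENNReal.ofReal ‖G i x‖ ∂μ) ≤ 2⁻¹ ^ (n+1) := by
    intro n
    have hpos : (0 : ℝ≥0∞) < 2⁻¹ ^ (n+1) := by
      apply ENNReal.pow_pos
      simp
    have h := (ENNReal.tendsto_nhds_zero.mp hui _ hpos).and (eventually_ge_atTop (n : ℝ))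
    obtain ⟨T, hT1, hT2⟩ := h.exists
    exact ⟨T, hT2, hT1⟩
  choose c hc1 hc2 using key
  have hsum := omega_summable c hc1
  obtain ⟨hconv, hmono, hnn, htend⟩ := omega_props c hc1
  refine ⟨fun t => ∑' n, max (t - c n) 0, hconv, hmono, hnn, htend, ?_⟩
  apply iSup_le
  intro i
  have hmeasn : Measurable fun x => ‖G i x‖ := (hGmeas i).norm
  have heq : ∫⁻ x, ENNReal.ofReal (∑' n, max (‖G i x‖ - c n) 0) ∂μ
      = ∑' n, ∫⁻ x, ENNReal.ofReal (max (‖G i x‖ - c n) 0) ∂μ := by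
    rw [← lintegral_tsum (f := fun n x => ENNReal.ofReal (max (‖G i x‖ - c n) 0)) (fun n =>
      (((hmeasn.sub measurable_const).max measurable_const).ennreal_ofReal).aemeasurable)]
    apply lintegral_congr
    intro x
    exact ENNReal.ofReal_tsum_of_nonneg (fun n => le_max_right _ _) (hsum _)
  rw [heq]
  have hterm : ∀ n : ℕ, ∫⁻ x, ENNReal.ofReal (max (‖G i x‖ - c n) 0) ∂μ ≤ 2⁻¹ ^ (n+1) := by
    intro n
    have hset : MeasurableSet {x | c n ≤ ‖G i x‖} := measurableSet_le measurable_const hmeasn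
    have hle : ∫⁻ x, ENNReal.ofReal (max (‖G i x‖ - c n) 0) ∂μ
        ≤ ∫⁻ x in {x | c n ≤ ‖G i x‖}, ENNReal.ofReal ‖G i x‖ ∂μ := by
      rw [← lintegral_indicator hset]
      apply lintegral_mono
      intro x
      simp only [Set.indicator_apply, Set.mem_setOf_eq]
      split_ifs with hx
      · 
        apply ENNReal.ofReal_le_ofReal
        have h0 : (0:ℝ) ≤ c n := le_trans (Nat.cast_nonneg n) (hc1 n)
        rw [max_le_iff]
        constructor <;> [linarith [norm_nonneg (G i x)]; exact norm_nonneg _]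
      · push_neg at hx
        rw [max_eq_right (sub_nonpos.mpr hx.le)]
        simp
    exact le_trans hle (le_trans (le_iSup (fun j => ∫⁻ x in {x | c n ≤ ‖G j x‖},
      ENNReal.ofReal ‖G j x‖ ∂μ) i) (hc2 n))
  calc ∑' n, ∫⁻ x, ENNReal.ofReal (max (‖G i x‖ - c n) 0) ∂μ
      ≤ ∑' n : ℕ, (2⁻¹ : ℝ≥0∞) ^ (n+1) := ENNReal.tsum_le_tsum hterm
    _ = 1 := by
        simp_rw [pow_succ']
        rw [ENNReal.tsum_mul_left, ENNReal.tsum_geometric]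
        rw [ENNReal.one_sub_inv_two, inv_inv]
        exact ENNReal.inv_mul_cancel two_ne_zero ENNReal.ofNat_ne_top

end
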